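/- Let G be a Dedekind σ-complete lattice-ordered abelian group and let tr : G → G be a unary operation such that: (T2) tr f ≥ 0 for all f ≥ 0; (T3) f ∧ tr g ≤ tr f ≤ f for all f, g ≥ 0; (T4) for all f ≥ 0, tr f = 0 implies f = 0. Then for every f ≥ 0, f = sup_{n∈ℕ} ((n · tr f) ∧ f), where n · tr f denotes the n-fold sum tr f + ⋯ + tr f. -/

import Mathlib

/-- A partially ordered set is Dedekind σ-complete if every nonempty countable subset that
admits an upper bound admits a supremum (least upper bound). -/
def DedekindSigmaComplete (B : Type*) [Preorder B] : Prop :=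
  ∀ A : Set B, A.Nonempty → A.Countable → (∃ b, b ∈ upperBounds A) → ∃ s, IsLUB A s

theorem sup_nsmul_trunc_of_T4 {G : Type*} [Lattice G] [AddCommGroup G]
    [CovariantClass G G (· + ·) (· ≤ ·)]
    (hG : DedekindSigmaComplete G) (tr : G → G)
    (hT2 : ∀ f : G, 0 ≤ f → 0 ≤ tr f)
    (hT3 : ∀ f g : G, 0 ≤ f → 0 ≤ g → f ⊓ tr g ≤ tr f ∧ tr f ≤ f)
    (hT4 : ∀ f : G, 0 ≤ f → tr f = 0 → f = 0) :
    ∀ f : G, 0 ≤ f → IsLUB (Set.range fun n : ℕ => (n • tr f) ⊓ f) f := by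
  intro f hf
  set A : Set G := Set.range fun n : ℕ => (n • tr f) ⊓ f with hA
  have hub : f ∈ upperBounds A := by
    rintro x ⟨n, rfl⟩; exact inf_le_right
  obtain ⟨s, hs⟩ := hG A ⟨_, ⟨0, rfl⟩⟩ (Set.countable_range _) ⟨f, hub⟩
  have hsf : s ≤ f := hs.2 hub
  set g : G := f - s with hgdef
  have hg0 : 0 ≤ g := sub_nonneg.mpr hsf
  have htrf : 0 ≤ tr f := hT2 f hf
  have key : ∀ n : ℕ, (n • tr f) ⊓ f + (tr f ⊓ g) ≤ s := by
    intro n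
    have han : (n • tr f) ⊓ f ≤ s := hs.1 ⟨n, rfl⟩
    have h1 : tr f ⊓ g ≤ tr f ⊓ (f - (n • tr f) ⊓ f) :=
      inf_le_inf_left _ (sub_le_sub_left han f)
    calc (n • tr f) ⊓ f + (tr f ⊓ g)
        ≤ (n • tr f) ⊓ f + (tr f ⊓ (f - (n • tr f) ⊓ f)) := add_le_add_right h1 _
      _ = ((n • tr f) ⊓ f + tr f) ⊓ f := by
          rw [add_inf]; congr 1; abel
      _ ≤ ((n + 1) • tr f) ⊓ f := by
          refine inf_le_inf_right _ ?_
          rw [add_nsmul, one_nsmul]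
          exact add_le_add_left inf_le_left _
      _ ≤ s := hs.1 ⟨n + 1, rfl⟩
  have hub2 : s - (tr f ⊓ g) ∈ upperBounds A := by
    rintro x ⟨n, rfl⟩
    exact le_sub_iff_add_le.mpr (key n)
  have h0 : tr f ⊓ g ≤ 0 := by
    have h := le_sub_iff_add_le.mp (hs.2 hub2)
    exact (add_le_iff_nonpos_right s).mp h
  have hinf : tr f ⊓ g = 0 := le_antisymm h0 (le_inf htrf hg0)
  have htrg_le_g : tr g ≤ g := (hT3 g f hg0 hf).2
  have hs0 : (0:G) ≤ s := by
    have h00 : (0 • tr f) ⊓ f ≤ s := hs.1 ⟨0, rfl⟩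
    simpa [inf_eq_left.mpr hf] using h00
  have hgf : g ≤ f := sub_le_self f hs0
  have htrg_le_trf : tr g ≤ tr f := by
    have h := (hT3 f g hf hg0).1
    rwa [inf_eq_right.mpr (htrg_le_g.trans hgf)] at h
  have htrg : tr g = 0 :=
    le_antisymm (hinf ▸ le_inf htrg_le_trf htrg_le_g) (hT2 g hg0)
  have hgz : g = 0 := hT4 g hg0 htrg
  rwa [(sub_eq_zero.mp hgz).symm] at hs
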